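/- The symmetry identity M S = Sᵀ M = Sᵀ M S holds; in particular Sᵀ M S is symmetric. -/

import Mathlib

open Matrix
theorem McPD {n : ℕ} (M P : Matrix (Fin n) (Fin n) ℝ) (hM : M.PosDef)
    (hP : P * P = P) (hPt : Pᵀ = P) (ν : ℝ) (hν : 0 < ν)
    (Mc : Matrix (Fin n) (Fin n) ℝ)
    (hMc : Mc = P * M * P + ν • (1 - P)) : Mc.PosDef := by
  have hMs : Mᵀ = M := hM.isHermitian
  have hQP : (1 - P) * (1 - P) = 1 - P := by
    simp [mul_sub, sub_mul, hP]
  have hQt : (1 - P)ᵀ = 1 - P := by simp [transpose_sub, hPt]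
  refine Matrix.PosDef.of_dotProduct_mulVec_pos ?_ ?_
  · show Mcᴴ = Mc
    rw [hMc, conjTranspose_eq_transpose_of_trivial]
    simp only [transpose_add, transpose_smul, transpose_sub,
      transpose_mul, transpose_one, hPt, hMs, Matrix.mul_assoc]
  · intro x hx
    rw [hMc, add_mulVec, dotProduct_add, smul_mulVec, dotProduct_smul]
    set y := P *ᵥ x with hy
    set z := (1 - P) *ᵥ x with hz
    have hyz : y + z = x := by
      rw [hy, hz, ← add_mulVec]; simp
    have h1 : star x ⬝ᵥ (P * M * P) *ᵥ x = star y ⬝ᵥ M *ᵥ y := by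
      rw [Matrix.mul_assoc, ← mulVec_mulVec, dotProduct_mulVec]
      nth_rewrite 1 [← hPt]
      rw [vecMul_transpose, ← mulVec_mulVec]
      simp [hy]
    have h2 : star x ⬝ᵥ (1 - P) *ᵥ x = star z ⬝ᵥ z := by
      conv_lhs => rw [← hQP]
      rw [← mulVec_mulVec, dotProduct_mulVec]
      nth_rewrite 1 [← hQt]
      rw [vecMul_transpose]
      simp [hz]
    rw [h1, h2, smul_eq_mul]
    rcases eq_or_ne y 0 with hy0 | hy0
    · have hz0 : z ≠ 0 := by
        intro h; apply hx; rw [← hyz, hy0, h, add_zero]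
      have h3 : (0:ℝ) < star z ⬝ᵥ z := dotProduct_star_self_pos_iff.mpr hz0
      have hm : (0:ℝ) ≤ star y ⬝ᵥ M *ᵥ y := hM.posSemidef.dotProduct_mulVec_nonneg y
      exact add_pos_of_nonneg_of_pos hm (mul_pos hν h3)
    · have h3 : (0:ℝ) < star y ⬝ᵥ M *ᵥ y := hM.dotProduct_mulVec_pos hy0
      have h4 : (0:ℝ) ≤ star z ⬝ᵥ z := dotProduct_star_self_nonneg z
      exact add_pos_of_pos_of_nonneg h3 (mul_nonneg hν.le h4)

theorem MS_symmetry {n : ℕ}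
    (M P : Matrix (Fin n) (Fin n) ℝ) (hM : M.PosDef)
    (hP : P * P = P) (hPt : Pᵀ = P) (ν : ℝ) (hν : 0 < ν)
    (Mc S : Matrix (Fin n) (Fin n) ℝ)
    (hMc : Mc = P * M * P + ν • (1 - P)) (hS : S = 1 - Mc⁻¹ * P * M) :
    M * S = Sᵀ * M ∧ Sᵀ * M = Sᵀ * M * S ∧ (Sᵀ * M * S)ᵀ = Sᵀ * M * S := by
  have hMs : Mᵀ = M := hM.isHermitian
  have hMcPD : Mc.PosDef := McPD M P hM hP hPt ν hν Mc hMc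
  have hdet : IsUnit Mc.det := hMcPD.det_pos.ne'.isUnit
  have e1 : Mc * Mc⁻¹ = 1 := Matrix.mul_nonsing_inv _ hdet
  have e2 : Mc⁻¹ * Mc = 1 := Matrix.nonsing_inv_mul _ hdet
  have hMct : Mcᵀ = Mc := by
    rw [← conjTranspose_eq_transpose_of_trivial]; exact hMcPD.1
  have hQt : (Mc⁻¹)ᵀ = Mc⁻¹ := by rw [Matrix.transpose_nonsing_inv, hMct]
  have hMcP : Mc * P = P * M * P := by
    rw [hMc, add_mul, Matrix.smul_mul, sub_mul, one_mul]
    simp [Matrix.mul_assoc, hP]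
  have hPMc : P * Mc = P * M * P := by
    rw [hMc, mul_add, Matrix.mul_smul, mul_sub, mul_one]
    simp [← Matrix.mul_assoc, hP]
  have hcomm : Mc⁻¹ * P = P * Mc⁻¹ := by
    calc Mc⁻¹ * P = Mc⁻¹ * P * (Mc * Mc⁻¹) := by rw [e1, mul_one]
    _ = Mc⁻¹ * (P * Mc) * Mc⁻¹ := by simp only [Matrix.mul_assoc]
    _ = Mc⁻¹ * (Mc * P) * Mc⁻¹ := by rw [hPMc, hMcP]
    _ = P * Mc⁻¹ := by rw [← Matrix.mul_assoc, e2, one_mul]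
  have b : ∀ X : Matrix (Fin n) (Fin n) ℝ, Mc⁻¹ * (P * X) = P * (Mc⁻¹ * X) := by
    intro X; rw [← Matrix.mul_assoc, hcomm, Matrix.mul_assoc]
  have a1 : ∀ X : Matrix (Fin n) (Fin n) ℝ, Mc⁻¹ * (Mc * X) = X := by
    intro X; rw [← Matrix.mul_assoc, e2, one_mul]
  have c : ∀ X : Matrix (Fin n) (Fin n) ℝ, P * (M * (P * X)) = Mc * (P * X) := by
    intro X; rw [← Matrix.mul_assoc, ← Matrix.mul_assoc, ← hMcP, Matrix.mul_assoc]
  have hSt : Sᵀ = 1 - M * (P * Mc⁻¹) := by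
    rw [hS]
    simp [transpose_sub, transpose_mul, transpose_one, hMs, hPt, hQt, Matrix.mul_assoc]
  have key2 : M * (P * (Mc⁻¹ * (M * (Mc⁻¹ * (P * M))))) = M * (Mc⁻¹ * (P * M)) := by
    rw [b M, ← b (M * (P * (Mc⁻¹ * M))), c (Mc⁻¹ * M), a1 (P * (Mc⁻¹ * M)), ← b M]
  refine ⟨?_, ?_, ?_⟩
  · rw [hSt, hS]
    simp only [mul_sub, sub_mul, mul_one, one_mul, Matrix.mul_assoc]
    rw [b M]
  · rw [hSt, hS]
    simp only [mul_sub, sub_mul, mul_one, one_mul, Matrix.mul_assoc]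
    rw [key2, b M]
    abel
  · simp only [transpose_mul, transpose_transpose, hMs, Matrix.mul_assoc]
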